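/- Let m ≥ 2 be even and let r ≥ 3 be odd. Then M(mK_r) = (mr²(mr+1)² + m)/8 − mr(mr+1)(2mr+1)/12 (an equality of rational numbers). -/

import Mathlib

open Finset

/-- The product-sum M(f) of a vertex labeling: the sum of `f u * f v` over all edges
`{u,v}` of `G`, each edge counted exactly once. -/
noncomputable def prodSum {V : Type*} [Fintype V] (G : SimpleGraph V) (f : V → ℕ) : ℕ := by
  classical
  exact ∑ e ∈ G.edgeFinset, Sym2.lift ⟨fun u v => f u * f v, fun u v => Nat.mul_comm _ _⟩ e

/-- A labeling of a graph on `V`: a bijection from the vertices onto `{1,…,|V|}`. -/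
def IsLabeling (V : Type*) [Fintype V] (f : V → ℕ) : Prop :=
  Set.BijOn f Set.univ (Set.Icc 1 (Fintype.card V))

/-- MinPS of `G`: the minimum of `M(f)` over all labelings `f`. -/
noncomputable def minPS {V : Type*} [Fintype V] (G : SimpleGraph V) : ℕ :=
  sInf { m | ∃ f : V → ℕ, IsLabeling V f ∧ prodSum G f = m }

/-- `mK_r`: the vertex-disjoint union of `m` copies of the complete graph `K_r`.
Vertex `(i, x)` lies in the `i`-th copy; two vertices are adjacent iff they are
distinct and lie in the same copy. -/
def mKGraph (m r : ℕ) : SimpleGraph (Fin m × Fin r) where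
  Adj a b := a.1 = b.1 ∧ a.2 ≠ b.2
  symm := ⟨fun a b h => ⟨h.1.symm, h.2.symm⟩⟩
  loopless := ⟨fun a h => h.2 rfl⟩

/-! ### Auxiliary lemmas -/

lemma sum_adj_pairs {V : Type*} [Fintype V] [DecidableEq V] (G : SimpleGraph V)
    [DecidableRel G.Adj] (p : Sym2 V → ℕ) :
    ∑ q ∈ univ.filter (fun q : V × V => G.Adj q.1 q.2), p s(q.1, q.2)
      = 2 * ∑ e ∈ G.edgeFinset, p e := by
  classical
  have hmaps : ∀ x ∈ univ.filter (fun q : V × V => G.Adj q.1 q.2),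
      (fun q : V × V => s(q.1, q.2)) x ∈ G.edgeFinset := by
    intro x hx
    simp only [mem_filter] at hx
    simpa [SimpleGraph.mem_edgeFinset] using hx.2
  rw [← Finset.sum_fiberwise_of_maps_to (g := fun q : V × V => s(q.1, q.2))
      (t := G.edgeFinset) hmaps]
  rw [Finset.mul_sum]
  refine Finset.sum_congr rfl ?_
  intro e he
  induction e with
  | _ u v =>
    rw [SimpleGraph.mem_edgeFinset, SimpleGraph.mem_edgeSet] at he
    have hne : u ≠ v := he.ne
    have hfib : (univ.filter (fun q : V × V => G.Adj q.1 q.2)).filter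
        (fun q : V × V => s(q.1, q.2) = s(u, v)) = {(u, v), (v, u)} := by
      ext ⟨x, y⟩
      simp only [mem_filter, mem_univ, true_and, mem_insert, mem_singleton,
        Sym2.eq_iff, Prod.mk.injEq]
      constructor
      · rintro ⟨_, (⟨rfl, rfl⟩ | ⟨rfl, rfl⟩)⟩ <;> simp
      · rintro (⟨rfl, rfl⟩ | ⟨rfl, rfl⟩) <;> simp [he, he.symm]
    rw [Finset.filter_filter] at hfib ⊢
    rw [hfib, Finset.sum_pair (by simp [hne])]
    have hs : s(v, u) = s(u, v) := Sym2.eq_swap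
    simp [hs, two_mul]

lemma structure_eq (m r : ℕ) (f : Fin m × Fin r → ℕ) :
    2 * prodSum (mKGraph m r) f + ∑ v : Fin m × Fin r, f v ^ 2
      = ∑ i : Fin m, (∑ x : Fin r, f (i, x)) ^ 2 := by
  classical
  have h1 : 2 * prodSum (mKGraph m r) f
      = ∑ q ∈ univ.filter (fun q : (Fin m × Fin r) × (Fin m × Fin r) =>
          (mKGraph m r).Adj q.1 q.2), f q.1 * f q.2 := by
    rw [prodSum, ← sum_adj_pairs (mKGraph m r)
      (Sym2.lift ⟨fun u v => f u * f v, fun u v => Nat.mul_comm _ _⟩)]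
    rfl
  have h2 : ∑ q ∈ univ.filter (fun q : (Fin m × Fin r) × (Fin m × Fin r) =>
        (mKGraph m r).Adj q.1 q.2), f q.1 * f q.2
      = ∑ i : Fin m, ∑ q ∈ (univ : Finset (Fin r × Fin r)).filter (fun q => q.1 ≠ q.2),
          f (i, q.1) * f (i, q.2) := by
    rw [← Finset.sum_product']
    refine Finset.sum_nbij' (i := fun q => (q.1.1, (q.1.2, q.2.2)))
      (j := fun p => ((p.1, p.2.1), (p.1, p.2.2))) ?_ ?_ ?_ ?_ ?_
    · rintro ⟨⟨i, x⟩, ⟨j, y⟩⟩ hq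
      simp only [mem_filter, mem_univ, true_and] at hq
      obtain ⟨rfl, hxy⟩ : _ ∧ _ := hq
      simp [Finset.mem_product, hxy]
    · rintro ⟨i, x, y⟩ hp
      simp only [Finset.mem_product, mem_filter, mem_univ, true_and] at hp
      simp only [mem_filter, mem_univ, true_and]
      exact show (i, x).1 = (i, y).1 ∧ (i, x).2 ≠ (i, y).2 from ⟨rfl, hp⟩
    · rintro ⟨⟨i, x⟩, ⟨j, y⟩⟩ hq
      simp only [mem_filter, mem_univ, true_and] at hq
      obtain ⟨h, _⟩ : _ ∧ _ := hq
      cases h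
      rfl
    · rintro ⟨i, x, y⟩ _; rfl
    · rintro ⟨⟨i, x⟩, ⟨j, y⟩⟩ hq
      simp only [mem_filter, mem_univ, true_and] at hq
      obtain ⟨h, _⟩ : _ ∧ _ := hq
      cases h
      rfl
  have h3 : ∀ i : Fin m, (∑ x : Fin r, f (i, x)) ^ 2
      = (∑ q ∈ (univ : Finset (Fin r × Fin r)).filter (fun q => q.1 ≠ q.2),
          f (i, q.1) * f (i, q.2)) + ∑ x : Fin r, f (i, x) ^ 2 := by
    intro i
    rw [sq, Finset.sum_mul_sum, ← Finset.sum_product', Finset.univ_product_univ]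
    rw [← Finset.sum_filter_add_sum_filter_not (univ : Finset (Fin r × Fin r))
        (fun q => q.1 ≠ q.2)]
    congr 1
    refine Finset.sum_nbij' (i := fun q => q.1) (j := fun x => (x, x)) ?_ ?_ ?_ ?_ ?_
    · intro q _; exact mem_univ _
    · intro x _
      simp
    · rintro ⟨x, y⟩ hq
      simp only [mem_filter, mem_univ, true_and, not_not] at hq
      cases hq
      rfl
    · intro x _; rfl
    · rintro ⟨x, y⟩ hq
      simp only [mem_filter, mem_univ, true_and, not_not] at hq
      cases hq
      simp [sq]
  rw [h1, h2, Fintype.sum_prod_type, ← Finset.sum_add_distrib]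
  exact (Finset.sum_congr rfl fun i _ => (h3 i).symm)

lemma labeling_sum {V : Type*} [Fintype V] {f : V → ℕ} (hf : IsLabeling V f) (g : ℕ → ℕ) :
    ∑ v : V, g (f v) = ∑ k ∈ Icc 1 (Fintype.card V), g k := by
  classical
  refine Finset.sum_nbij (i := f) ?_ ?_ ?_ ?_
  · intro v _
    have := hf.1 (Set.mem_univ v)
    simpa [Finset.mem_Icc, Set.mem_Icc] using this
  · intro a _ b _ hab
    exact hf.2.1 (Set.mem_univ a) (Set.mem_univ b) hab
  · intro k hk
    have : k ∈ Set.Icc 1 (Fintype.card V) := by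
      simpa [Finset.mem_Icc, Set.mem_Icc] using hk
    obtain ⟨v, _, rfl⟩ := hf.2.2 this
    exact ⟨v, by simp, rfl⟩
  · intro v _; rfl

lemma key_lb (n : ℕ) (A : ℤ) (hA : Odd A) (s : Fin n → ℤ)
    (hsum : 2 * ∑ i, s i = n * A) :
    (n : ℤ) * A ^ 2 + n ≤ 4 * ∑ i, (s i) ^ 2 := by
  have h1 : ∀ i : Fin n, (1 : ℤ) ≤ (2 * s i - A) ^ 2 := by
    intro i
    have hodd : Odd (2 * s i - A) := by
      rcases hA with ⟨k, hk⟩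
      exact ⟨s i - k - 1, by rw [hk]; ring⟩
    have hne : 2 * s i - A ≠ 0 := by
      intro h; rw [h] at hodd; exact (Int.not_odd_iff_even.mpr Even.zero) hodd
    have habs := Int.one_le_abs hne
    have hsq : (2 * s i - A) ^ 2 = |2 * s i - A| * |2 * s i - A| := by
      rw [abs_mul_abs_self]; ring
    nlinarith
  have h2 : (n : ℤ) ≤ ∑ i, (2 * s i - A) ^ 2 := by
    calc (n : ℤ) = ∑ _i : Fin n, (1 : ℤ) := by simp
    _ ≤ _ := Finset.sum_le_sum fun i _ => h1 i
  have h3 : ∑ i, (2 * s i - A) ^ 2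
      = 4 * ∑ i, (s i) ^ 2 - 4 * A * ∑ i, s i + n * A ^ 2 := by
    have he : ∀ i : Fin n, (2 * s i - A) ^ 2 = 4 * (s i) ^ 2 - 4 * A * s i + A ^ 2 := by
      intro i; ring
    rw [Finset.sum_congr rfl fun i _ => he i]
    rw [Finset.sum_add_distrib, Finset.sum_sub_distrib, ← Finset.mul_sum, ← Finset.mul_sum]
    simp [mul_comm]
  rw [h3] at h2
  have h4 : 4 * A * ∑ i, s i = 2 * ((n : ℤ) * A) * A := by rw [← hsum]; ring
  ring_nf at h2 h4 ⊢
  linarith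

lemma key_eq (n : ℕ) (A : ℤ) (s : Fin n → ℤ)
    (hsum : 2 * ∑ i, s i = n * A) (h1 : ∀ i : Fin n, (2 * s i - A) ^ 2 = 1) :
    4 * ∑ i, (s i) ^ 2 = (n : ℤ) * A ^ 2 + n := by
  have h2 : ∑ i, (2 * s i - A) ^ 2 = (n : ℤ) := by
    rw [Finset.sum_congr rfl fun i _ => h1 i]; simp
  have h3 : ∑ i, (2 * s i - A) ^ 2
      = 4 * ∑ i, (s i) ^ 2 - 4 * A * ∑ i, s i + n * A ^ 2 := by
    have he : ∀ i : Fin n, (2 * s i - A) ^ 2 = 4 * (s i) ^ 2 - 4 * A * s i + A ^ 2 := by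
      intro i; ring
    rw [Finset.sum_congr rfl fun i _ => he i]
    rw [Finset.sum_add_distrib, Finset.sum_sub_distrib, ← Finset.mul_sum, ← Finset.mul_sum]
    simp [mul_comm]
  rw [h3] at h2
  have h4 : 4 * A * ∑ i, s i = 2 * ((n : ℤ) * A) * A := by rw [← hsum]; ring
  ring_nf at h2 h4 ⊢
  linarith

lemma gauss1 (N : ℕ) : 2 * ∑ k ∈ Icc 1 N, (k : ℤ) = N * (N + 1) := by
  induction N with
  | zero => simp
  | succ n ih =>
    rw [Finset.sum_Icc_succ_top (by omega : 1 ≤ n + 1)]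
    push_cast
    push_cast at ih
    linarith

lemma gauss2 (N : ℕ) : 6 * ∑ k ∈ Icc 1 N, (k : ℤ) ^ 2 = N * (N + 1) * (2 * N + 1) := by
  induction N with
  | zero => simp
  | succ n ih =>
    rw [Finset.sum_Icc_succ_top (by omega : 1 ≤ n + 1)]
    push_cast
    push_cast at ih
    ring_nf
    ring_nf at ih
    linarith

/-! ### The optimal labeling -/

/-- Column permutation: the value in `{0,…,m-1}` assigned to row `i` by column `j`,
where `m = 2*h`. -/
def gcol (m h j i : ℕ) : ℕ :=
  if j = 0 then i
  else if j = 1 then (if i < h then i + h else i - h)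
  else if j = 2 then (if i < h then 2 * (h - 1 - i) else 2 * (2 * h - 1 - i) + 1)
  else if j % 2 = 1 then i else m - 1 - i

/-- The optimal labeling of `mK_r`. -/
def f0 (m h r : ℕ) : Fin m × Fin r → ℕ :=
  fun v => v.2.val * m + gcol m h v.2.val v.1.val + 1

lemma gcol_lt {m h : ℕ} (hh : 1 ≤ h) (hm : m = 2 * h) (j : ℕ) {i : ℕ} (hi : i < m) :
    gcol m h j i < m := by
  unfold gcol; split_ifs <;> omega

lemma gcol_inj {m h : ℕ} (hm : m = 2 * h) (j : ℕ) {i i' : ℕ}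
    (hi : i < m) (hi' : i' < m) (he : gcol m h j i = gcol m h j i') : i = i' := by
  unfold gcol at he; split_ifs at he <;> omega

lemma parity_sum (a b u : ℕ) :
    ∑ j ∈ Ico 3 (2 * u + 3), (if j % 2 = 1 then a else b) = u * (a + b) := by
  induction u with
  | zero => simp
  | succ n ih =>
    have e1 : 2 * (n + 1) + 3 = (2 * n + 4) + 1 := by ring
    rw [e1, Finset.sum_Ico_succ_top (by omega), Finset.sum_Ico_succ_top (by omega), ih]
    rw [if_pos (by omega : (2 * n + 3) % 2 = 1), if_neg (by omega : ¬ (2 * n + 4) % 2 = 1)]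
    ring

lemma gsum {m h u : ℕ} (hh : 1 ≤ h) (hm : m = 2 * h) {i : ℕ} (hi : i < m) :
    ∑ j ∈ range (2 * u + 3), gcol m h j i
      = gcol m h 0 i + gcol m h 1 i + gcol m h 2 i + u * (m - 1) := by
  have hsplit : ∑ j ∈ range (2 * u + 3), gcol m h j i
      = ∑ j ∈ range 3, gcol m h j i + ∑ j ∈ Ico 3 (2 * u + 3), gcol m h j i := by
    rw [Finset.range_eq_Ico, ← Finset.sum_Ico_consecutive _ (by omega : 0 ≤ 3) (by omega), Finset.range_eq_Ico]
  have htail : ∑ j ∈ Ico 3 (2 * u + 3), gcol m h j i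
      = ∑ j ∈ Ico 3 (2 * u + 3), (if j % 2 = 1 then i else m - 1 - i) := by
    refine Finset.sum_congr rfl ?_
    intro j hj
    rw [Finset.mem_Ico] at hj
    unfold gcol
    rw [if_neg (by omega), if_neg (by omega), if_neg (by omega)]
  rw [hsplit, htail, parity_sum, show i + (m - 1 - i) = m - 1 from by omega,
    show ∑ j ∈ range 3, gcol m h j i = gcol m h 0 i + gcol m h 1 i + gcol m h 2 i from by
      simp [Finset.sum_range_succ]]

lemma rowsum {m h r u : ℕ} (hh : 1 ≤ h) (hm : m = 2 * h) (hr : r = 2 * u + 3) (i : Fin m) :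
    2 * (∑ x : Fin r, f0 m h r (i, x)) + 1 = r * (m * r + 1)
    ∨ 2 * (∑ x : Fin r, f0 m h r (i, x)) = r * (m * r + 1) + 1 := by
  have hsum : ∑ x : Fin r, f0 m h r (i, x)
      = ∑ j ∈ range r, (j * m + gcol m h j i.val + 1) := by
    rw [← Fin.sum_univ_eq_sum_range (fun j => j * m + gcol m h j i.val + 1) r]
    rfl
  have hdist : ∑ j ∈ range r, (j * m + gcol m h j i.val + 1)
      = (∑ j ∈ range r, j) * m + (∑ j ∈ range r, gcol m h j i.val) + r := by
    rw [Finset.sum_add_distrib, Finset.sum_add_distrib, Finset.sum_mul]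
    simp
  have h2S := Finset.sum_range_id_mul_two r
  rw [show r - 1 = 2 * u + 2 from by omega] at h2S
  have hi : i.val < m := i.isLt
  have hgs := gsum (u := u) hh hm hi
  rw [← hr] at hgs
  obtain ⟨h', rfl⟩ : ∃ h', h = h' + 1 := ⟨h - 1, by omega⟩
  have g0 : gcol m (h' + 1) 0 i.val = i.val := rfl
  rcases lt_or_ge i.val (h' + 1) with hcase | hcase
  · left
    have g1 : gcol m (h' + 1) 1 i.val = i.val + (h' + 1) := by
      unfold gcol; rw [if_neg (by omega), if_pos rfl, if_pos hcase]
    have g2 : gcol m (h' + 1) 2 i.val = 2 * ((h' + 1) - 1 - i.val) := by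
      unfold gcol; rw [if_neg (by omega), if_neg (by omega), if_pos rfl, if_pos hcase]
    have hg123 : ∑ j ∈ range r, gcol m (h' + 1) j i.val = 3 * h' + 1 + u * (m - 1) := by
      rw [hgs, g0, g1, g2]; omega
    rw [hsum, hdist, hg123, show m - 1 = 2 * h' + 1 from by omega]
    subst hm hr
    zify
    zify at h2S
    linear_combination (2 * (h' + 1) : ℤ) * h2S
  · right
    have g1 : gcol m (h' + 1) 1 i.val = i.val - (h' + 1) := by
      unfold gcol; rw [if_neg (by omega), if_pos rfl, if_neg (by omega)]
    have g2 : gcol m (h' + 1) 2 i.val = 2 * (2 * (h' + 1) - 1 - i.val) + 1 := by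
      unfold gcol; rw [if_neg (by omega), if_neg (by omega), if_pos rfl, if_neg (by omega)]
    have hg123 : ∑ j ∈ range r, gcol m (h' + 1) j i.val = 3 * h' + 2 + u * (m - 1) := by
      rw [hgs, g0, g1, g2]; omega
    rw [hsum, hdist, hg123, show m - 1 = 2 * h' + 1 from by omega]
    subst hm hr
    zify
    zify at h2S
    linear_combination (2 * (h' + 1) : ℤ) * h2S

lemma f0_labeling {m h r : ℕ} (hh : 1 ≤ h) (hm : m = 2 * h) (hr : 1 ≤ r) :
    IsLabeling (Fin m × Fin r) (f0 m h r) := by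
  have hcard : Fintype.card (Fin m × Fin r) = m * r := by simp
  have hm0 : 0 < m := by omega
  have hmaps : ∀ v : Fin m × Fin r, f0 m h r v ∈ Set.Icc 1 (m * r) := by
    rintro ⟨i, j⟩
    have hg : gcol m h j.val i.val < m := gcol_lt hh hm _ i.isLt
    have hj : j.val < r := j.isLt
    constructor
    · simp [f0]
    · show j.val * m + gcol m h j.val i.val + 1 ≤ m * r
      have h1 : j.val * m + gcol m h j.val i.val + 1 ≤ (j.val + 1) * m := by
        rw [add_mul, one_mul]; omega
      have h2 : (j.val + 1) * m ≤ r * m := Nat.mul_le_mul_right m (by omega)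
      rw [mul_comm m r]; omega
  have hinj : Function.Injective (f0 m h r) := by
    rintro ⟨i, j⟩ ⟨i', j'⟩ he
    have hg : gcol m h j.val i.val < m := gcol_lt hh hm _ i.isLt
    have hg' : gcol m h j'.val i'.val < m := gcol_lt hh hm _ i'.isLt
    have he' : j.val * m + gcol m h j.val i.val = j'.val * m + gcol m h j'.val i'.val := by
      have : j.val * m + gcol m h j.val i.val + 1 = j'.val * m + gcol m h j'.val i'.val + 1 := he
      omega
    have hjj : j.val = j'.val := by
      have e2 : gcol m h j.val i.val + m * j.val = gcol m h j'.val i'.val + m * j'.val := by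
        linarith [he']
      have d1 : (gcol m h j.val i.val + m * j.val) / m = j.val := by
        rw [Nat.add_mul_div_left _ _ hm0, Nat.div_eq_of_lt hg, Nat.zero_add]
      have d1' : (gcol m h j'.val i'.val + m * j'.val) / m = j'.val := by
        rw [Nat.add_mul_div_left _ _ hm0, Nat.div_eq_of_lt hg', Nat.zero_add]
      rw [← d1, ← d1', e2]
    have hj2 : j = j' := Fin.ext hjj
    subst hj2
    have : gcol m h j.val i.val = gcol m h j.val i'.val := by omega
    exact Prod.ext (Fin.ext (gcol_inj hm j.val i.isLt i'.isLt this)) rfl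
  refine ⟨fun v _ => by rw [hcard]; exact hmaps v, fun a _ b _ hab => hinj hab, ?_⟩
  intro k hk
  rw [hcard] at hk
  have hksub : k ∈ Finset.Icc 1 (m * r) := by
    rw [Finset.mem_Icc]; exact ⟨hk.1, hk.2⟩
  have hTsub : Finset.image (f0 m h r) univ ⊆ Finset.Icc 1 (m * r) := by
    intro x hx
    rw [Finset.mem_image] at hx
    obtain ⟨v, _, rfl⟩ := hx
    rw [Finset.mem_Icc]
    exact ⟨(hmaps v).1, (hmaps v).2⟩
  have hTcard : (Finset.image (f0 m h r) univ).card = m * r := by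
    rw [Finset.card_image_of_injective _ hinj, card_univ, hcard]
  have hTeq : Finset.image (f0 m h r) univ = Finset.Icc 1 (m * r) :=
    Finset.eq_of_subset_of_card_le hTsub (by rw [hTcard, Nat.card_Icc]; omega)
  rw [← hTeq] at hksub
  rw [Finset.mem_image] at hksub
  obtain ⟨v, _, rfl⟩ := hksub
  exact ⟨v, Set.mem_univ v, rfl⟩

/-! ### Main theorem -/

/-- For even `m ≥ 2` and odd `r ≥ 3`,
`M(mK_r) = (mr²(mr+1)² + m)/8 − mr(mr+1)(2mr+1)/12`. -/
theorem statement6 (m r : ℕ) (hm : 2 ≤ m) (hmeven : Even m) (hr : 3 ≤ r) (hrodd : Odd r) :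
    (minPS (mKGraph m r) : ℚ) =
      ((m : ℚ) * r ^ 2 * (m * r + 1) ^ 2 + m) / 8
        - m * r * (m * r + 1) * (2 * m * r + 1) / 12 := by
  classical
  obtain ⟨h, hh0⟩ := hmeven
  have hm2 : m = 2 * h := by omega
  have hh : 1 ≤ h := by omega
  obtain ⟨k, hk⟩ := hrodd
  obtain ⟨u, hr2⟩ : ∃ u, r = 2 * u + 3 := ⟨k - 1, by omega⟩
  have hcard : Fintype.card (Fin m × Fin r) = m * r := by simp
  set A : ℕ := r * (m * r + 1) with hA
  have hAoddn : Odd A := by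
    refine (Nat.odd_mul).mpr ⟨⟨k, by omega⟩, ?_⟩
    have : Even (m * r) := ⟨h * r, by rw [hm2]; ring⟩
    exact Even.add_one this
  have hAodd : Odd (A : ℤ) := by exact_mod_cast hAoddn
  -- key identity satisfied by every labeling
  have hkey : ∀ f : Fin m × Fin r → ℕ, IsLabeling (Fin m × Fin r) f →
      (8 : ℤ) * prodSum (mKGraph m r) f + 4 * ∑ t ∈ Icc 1 (m * r), (t : ℤ) ^ 2
        = 4 * ∑ i : Fin m, ((∑ x : Fin r, f (i, x) : ℕ) : ℤ) ^ 2
      ∧ 2 * ∑ i : Fin m, ((∑ x : Fin r, f (i, x) : ℕ) : ℤ) = (m : ℤ) * A := by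
    intro f hf
    have hstr := structure_eq m r f
    have hsq : ∑ v : Fin m × Fin r, f v ^ 2 = ∑ t ∈ Icc 1 (m * r), t ^ 2 := by
      have := labeling_sum hf (fun n => n ^ 2)
      rwa [hcard] at this
    have hs1 : ∑ v : Fin m × Fin r, f v = ∑ t ∈ Icc 1 (m * r), t := by
      have := labeling_sum hf id
      rwa [hcard] at this
    have hsplit : ∑ i : Fin m, ∑ x : Fin r, f (i, x) = ∑ v : Fin m × Fin r, f v :=
      (Fintype.sum_prod_type _).symm
    have hn : ∑ i : Fin m, ∑ x : Fin r, f (i, x) = ∑ t ∈ Icc 1 (m * r), t :=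
      hsplit.trans hs1
    constructor
    · have : ((2 * prodSum (mKGraph m r) f + ∑ v : Fin m × Fin r, f v ^ 2 : ℕ) : ℤ)
          = ((∑ i : Fin m, (∑ x : Fin r, f (i, x)) ^ 2 : ℕ) : ℤ) := by exact_mod_cast hstr
      push_cast at this
      have hsqz : ∑ v : Fin m × Fin r, ((f v : ℤ)) ^ 2
          = ∑ t ∈ Icc 1 (m * r), (t : ℤ) ^ 2 := by exact_mod_cast hsq
      rw [hsqz] at this
      push_cast
      linarith
    · push_cast
      have hz := congrArg (fun n : ℕ => (n : ℤ)) hn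
      push_cast at hz
      rw [hz]
      have hg := gauss1 (m * r)
      push_cast at hg
      have hAz : (A : ℤ) = (r : ℤ) * ((m : ℤ) * r + 1) := by rw [hA]; push_cast; ring
      rw [hAz]
      linear_combination hg
  -- the optimal labeling
  have hlab0 : IsLabeling (Fin m × Fin r) (f0 m h r) := f0_labeling hh hm2 (by omega)
  set T : ℕ := prodSum (mKGraph m r) (f0 m h r) with hT
  have hmem : T ∈ { t | ∃ f : Fin m × Fin r → ℕ,
      IsLabeling (Fin m × Fin r) f ∧ prodSum (mKGraph m r) f = t } := ⟨f0 m h r, hlab0, rfl⟩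
  obtain ⟨hkey0, hsum0⟩ := hkey (f0 m h r) hlab0
  have hsq0 : 4 * ∑ i : Fin m, ((∑ x : Fin r, f0 m h r (i, x) : ℕ) : ℤ) ^ 2
      = (m : ℤ) * (A : ℤ) ^ 2 + m := by
    refine key_eq m (A : ℤ) _ hsum0 ?_
    intro i
    rcases rowsum hh hm2 hr2 i with hc | hc
    · have hz : 2 * ((∑ x : Fin r, f0 m h r (i, x) : ℕ) : ℤ) + 1 = (A : ℤ) := by
        exact_mod_cast hc
      have : 2 * ((∑ x : Fin r, f0 m h r (i, x) : ℕ) : ℤ) - A = -1 := by omega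
      rw [this]; norm_num
    · have hz : 2 * ((∑ x : Fin r, f0 m h r (i, x) : ℕ) : ℤ) = (A : ℤ) + 1 := by
        exact_mod_cast hc
      have : 2 * ((∑ x : Fin r, f0 m h r (i, x) : ℕ) : ℤ) - A = 1 := by omega
      rw [this]; norm_num
  have h8T : (8 : ℤ) * T + 4 * ∑ t ∈ Icc 1 (m * r), (t : ℤ) ^ 2
      = (m : ℤ) * (A : ℤ) ^ 2 + m := by rw [← hsq0]; exact hkey0
  -- compute minPS
  have hmin : minPS (mKGraph m r) = T := by
    refine le_antisymm (Nat.sInf_le hmem) (le_csInf ⟨T, hmem⟩ ?_)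
    rintro t ⟨f, hf, rfl⟩
    obtain ⟨hk1, hk2⟩ := hkey f hf
    have hlb := key_lb m (A : ℤ) hAodd _ hk2
    have : (8 : ℤ) * T ≤ 8 * prodSum (mKGraph m r) f := by linarith
    exact_mod_cast by linarith
  rw [hmin]
  -- final arithmetic
  have hQ := gauss2 (m * r)
  have h24 : (24 : ℤ) * T = 3 * ((m : ℤ) * (A : ℤ) ^ 2 + m)
      - 2 * ((m * r : ℤ) * ((m * r : ℤ) + 1) * (2 * (m * r : ℤ) + 1)) := by
    push_cast at hQ
    linarith [h8T, hQ]
  have h24q : (24 : ℚ) * T = 3 * ((m : ℚ) * ((r : ℚ) * ((m : ℚ) * r + 1)) ^ 2 + m)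
      - 2 * ((m * r : ℚ) * ((m * r : ℚ) + 1) * (2 * (m * r : ℚ) + 1)) := by
    have := h24
    rw [hA] at this
    push_cast at this ⊢
    exact_mod_cast this
  linear_combination (1 / 24 : ℚ) * h24q
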